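/- Let K > 1. Then the equation m = tanh(K·m) has exactly three real solutions: they are 0, m* and −m*, where m* is the unique solution in the open interval (0,1). -/

import Mathlib

open Real

/-- tanh is trapped in (-1, 1). -/
lemma tanh_mem_Ioo (x : ℝ) : Real.tanh x ∈ Set.Ioo (-1 : ℝ) 1 := by
  have hc : 0 < Real.cosh x := Real.cosh_pos x
  rw [Real.tanh_eq_sinh_div_cosh]
  constructor
  · rw [lt_div_iff₀ hc]
    nlinarith [Real.sinh_add_cosh x, Real.exp_pos x]
  · rw [div_lt_one hc]
    nlinarith [Real.cosh_sub_sinh x, Real.exp_pos (-x)]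

lemma hasDerivAt_tanh (x : ℝ) :
    HasDerivAt Real.tanh ((Real.cosh x ^ 2)⁻¹) x := by
  have hfun : Real.tanh = fun y => Real.sinh y / Real.cosh y := by
    funext y; exact Real.tanh_eq_sinh_div_cosh y
  have h := (Real.hasDerivAt_sinh x).div (Real.hasDerivAt_cosh x)
    (ne_of_gt (Real.cosh_pos x))
  rw [hfun]
  refine h.congr_deriv ?_
  have h1 : Real.cosh x ^ 2 - Real.sinh x ^ 2 = 1 := Real.cosh_sq_sub_sinh_sq x
  field_simp
  nlinarith

lemma deriv_tanh : deriv Real.tanh = fun x => (Real.cosh x ^ 2)⁻¹ := by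
  funext x; exact (hasDerivAt_tanh x).deriv

lemma strictConcaveOn_tanh : StrictConcaveOn ℝ (Set.Ici (0 : ℝ)) Real.tanh := by
  apply strictConcaveOn_of_deriv2_neg (convex_Ici 0)
  · exact fun x _ => (hasDerivAt_tanh x).continuousAt.continuousWithinAt
  · intro x hx
    rw [interior_Ici] at hx
    have hsinh : 0 < Real.sinh x := Real.sinh_pos_iff.2 hx
    have hcosh : 0 < Real.cosh x := Real.cosh_pos x
    have h2 : HasDerivAt (fun y => (Real.cosh y ^ 2)⁻¹)
        (-(2 * Real.cosh x ^ 1 * Real.sinh x) / (Real.cosh x ^ 2) ^ 2) x := by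
      exact ((Real.hasDerivAt_cosh x).pow 2).inv (pow_ne_zero 2 (Real.cosh_pos x).ne')
    have : deriv^[2] Real.tanh x
        = -(2 * Real.cosh x ^ 1 * Real.sinh x) / (Real.cosh x ^ 2) ^ 2 := by
      simp only [Function.iterate_succ, Function.iterate_zero, Function.comp_apply, id]
      rw [deriv_tanh]
      exact h2.deriv
    rw [this]
    have : (0:ℝ) < 2 * Real.cosh x ^ 1 * Real.sinh x := by positivity
    apply div_neg_of_neg_of_pos (by linarith) (by positivity)

/-- For `K > 1`, the zero-field Curie–Weiss equation `m = tanh(K m)` has exactly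
three real solutions: `0`, `m*` and `-m*`, where `m*` is the unique solution in `(0,1)`. -/
theorem curie_weiss_three_solutions
    (K : ℝ) (hK : 1 < K) :
    ∃ mstar : ℝ, mstar ∈ Set.Ioo (0 : ℝ) 1 ∧
      mstar = Real.tanh (K * mstar) ∧
      (∀ x ∈ Set.Ioo (0 : ℝ) 1, x = Real.tanh (K * x) → x = mstar) ∧
      {m : ℝ | m = Real.tanh (K * m)} = {0, mstar, -mstar} := by
  have hK0 : (0:ℝ) < K := by linarith
  -- the function g(x) = tanh(Kx) - x
  set g : ℝ → ℝ := fun x => Real.tanh (K * x) - x with hg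
  have htanhcont : Continuous Real.tanh :=
    continuous_iff_continuousAt.2 fun x => (hasDerivAt_tanh x).continuousAt
  have hgcont : Continuous g :=
    (htanhcont.comp (continuous_const.mul continuous_id)).sub continuous_id
  -- starting point x₀ = log K / K has g(x₀) > 0
  set x₀ : ℝ := Real.log K / K with hx₀def
  have hlogK : 0 < Real.log K := Real.log_pos hK
  have hx₀pos : 0 < x₀ := by positivity
  have hx₀lt1 : x₀ < 1 := by
    rw [div_lt_one hK0]
    have := Real.log_lt_sub_one_of_pos hK0 (ne_of_gt hK)
    linarith
  have hKx₀ : K * x₀ = Real.log K := by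
    rw [hx₀def]; field_simp
  have hgx₀ : 0 < g x₀ := by
    have hsinh : K * x₀ < Real.sinh (K * x₀) :=
      Real.self_lt_sinh_iff.2 (by rw [hKx₀]; exact hlogK)
    have hcosh : Real.cosh (K * x₀) < K := by
      rw [hKx₀, Real.cosh_eq, Real.exp_log hK0, Real.exp_neg, Real.exp_log hK0]
      rw [div_lt_iff₀ (by norm_num : (0:ℝ) < 2)]
      have h1 : K * K⁻¹ = 1 := mul_inv_cancel₀ (ne_of_gt hK0)
      nlinarith [sq_nonneg (K - 1)]
    have hcoshpos : 0 < Real.cosh (K * x₀) := Real.cosh_pos _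
    have : x₀ < Real.tanh (K * x₀) := by
      rw [Real.tanh_eq_sinh_div_cosh, lt_div_iff₀ hcoshpos]
      calc x₀ * Real.cosh (K * x₀) < x₀ * K := by
            exact mul_lt_mul_of_pos_left hcosh hx₀pos
        _ = K * x₀ := by ring
        _ < Real.sinh (K * x₀) := hsinh
    simpa [hg] using sub_pos.2 this
  have hg1 : g 1 < 0 := by
    have := (tanh_mem_Ioo (K * 1)).2
    simp only [hg]; linarith
  -- existence of root in (x₀, 1) ⊆ (0,1)
  obtain ⟨m, hm_mem, hm_root⟩ : ∃ m ∈ Set.Icc x₀ 1, g m = 0 := by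
    have := intermediate_value_Icc' (le_of_lt hx₀lt1) hgcont.continuousOn
    have h0 : (0:ℝ) ∈ Set.Icc (g 1) (g x₀) := ⟨le_of_lt hg1, le_of_lt hgx₀⟩
    obtain ⟨m, hm1, hm2⟩ := this h0
    exact ⟨m, hm1, hm2⟩
  have hm_pos : 0 < m := lt_of_lt_of_le hx₀pos hm_mem.1
  have hm_lt1 : m < 1 := by
    rcases lt_or_eq_of_le hm_mem.2 with h | h
    · exact h
    · exfalso; rw [h] at hm_root; rw [hm_root] at hg1; exact lt_irrefl 0 hg1
  have hm_fix : m = Real.tanh (K * m) := by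
    have : Real.tanh (K * m) - m = 0 := hm_root
    linarith
  -- uniqueness of positive fixed point via strict concavity
  have huniq : ∀ a b : ℝ, 0 < a → a < b →
      a = Real.tanh (K * a) → b = Real.tanh (K * b) → False := by
    intro a b ha hab hfa hfb
    have hb : 0 < b := lt_trans ha hab
    have hKb : (0:ℝ) ≤ K * b := by positivity
    set t : ℝ := a / b with ht
    have ht0 : 0 < t := by positivity
    have ht1 : t < 1 := (div_lt_one hb).2 hab
    have hne : (0:ℝ) ≠ K * b := ne_of_lt (by positivity)
    have hsum : (1 - t) + t = 1 := by ring
    have hkey := strictConcaveOn_tanh.2 (Set.self_mem_Ici (a := (0:ℝ))) hKb hne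
      (by linarith : (0:ℝ) < 1 - t) ht0 hsum
    rw [smul_eq_mul, smul_eq_mul, smul_eq_mul, smul_eq_mul] at hkey
    have htb : t * b = a := div_mul_cancel₀ a (ne_of_gt hb)
    have harg : (1 - t) * 0 + t * (K * b) = K * a := by
      rw [mul_zero, zero_add, show t * (K * b) = K * (t * b) by ring, htb]
    rw [harg, Real.tanh_zero, ← hfb, ← hfa] at hkey
    rw [mul_zero, zero_add, htb] at hkey
    exact lt_irrefl a hkey
  have huniq' : ∀ x ∈ Set.Ioo (0 : ℝ) 1, x = Real.tanh (K * x) → x = m := by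
    intro x hx hfx
    rcases lt_trichotomy x m with h | h | h
    · exact absurd (huniq x m hx.1 h hfx hm_fix) (fun h => h)
    · exact h
    · exact absurd (huniq m x hm_pos h hm_fix hfx) (fun h => h)
  refine ⟨m, ⟨hm_pos, hm_lt1⟩, hm_fix, huniq', ?_⟩
  ext y
  simp only [Set.mem_setOf_eq, Set.mem_insert_iff, Set.mem_singleton_iff]
  constructor
  · intro hy
    rcases lt_trichotomy y 0 with h | h | h
    · right; right
      have hy' : -y = Real.tanh (K * (-y)) := by
        rw [mul_neg, Real.tanh_neg]; linarith
      have hylt1 : -y < 1 := by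
        have := (tanh_mem_Ioo (K * y)).1
        linarith
      have := huniq' (-y) ⟨by linarith, hylt1⟩ hy'
      linarith
    · left; exact h
    · right; left
      have hylt1 : y < 1 := by
        have := (tanh_mem_Ioo (K * y)).2; linarith
      exact huniq' y ⟨h, hylt1⟩ hy
  · intro hy
    rcases hy with h | h | h
    · rw [h]; simp [Real.tanh_zero]
    · rw [h]; exact hm_fix
    · rw [h, mul_neg, Real.tanh_neg]; linarith
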